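/- Let V ∈ U(Â⊗B̂) be a bicharacter and define σ^V : B̂⊗Â → Â⊗B̂ by σ^V(ŷ) := V σ(ŷ) V* where σ is the flip. Define Δ_D : B̂⊗Â → (B̂⊗Â)⊗(B̂⊗Â) by Δ_D(b̂⊗â) := (id⊗σ^V⊗id)(Δ̂_B(b̂)⊗Δ̂_A(â)). Then Δ_D is coassociative: (Δ_D⊗id)Δ_D = (id⊗Δ_D)Δ_D. -/

import Mathlib

/-!
STATEMENT 8.  Let `V ∈ U(Â⊗B̂)` be a bicharacter and define `σ^V : B̂⊗Â → Â⊗B̂` by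
`σ^V(ŷ) := V σ(ŷ) V*` (`σ` the flip).  Define `Δ_D : B̂⊗Â → (B̂⊗Â)⊗(B̂⊗Â)` by
`Δ_D(b̂⊗â) := (id ⊗ σ^V ⊗ id)(Δ̂_B(b̂) ⊗ Δ̂_A(â))`.  Then `Δ_D` is coassociative:
`(Δ_D ⊗ id) Δ_D = (id ⊗ Δ_D) Δ_D`.

We work with algebraic tensor products over `ℂ`; the comultiplications are algebra
homomorphisms `Δ̂_A : Â → Â⊗Â`, `Δ̂_B : B̂ → B̂⊗B̂` and `V` is an invertible element
(unitary) of `Â⊗B̂`.  After untwisting the middle flip, `Δ_D` is conjugation by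
`V₂₃` of the untwisted codouble comultiplication
`(b̂⊗â) ↦ Δ̂_B(b̂)₁₃ Δ̂_A(â)₂₄`, implemented by `tensorTensorTensorComm`.
-/

open scoped TensorProduct
/-- `V₂₃ ∈ (B̂⊗Â)⊗(B̂⊗Â)`: the image of `V ∈ Â⊗B̂` in legs 2 and 3. -/
noncomputable def Vmid {Ahat Bhat : Type*} [Ring Ahat] [Ring Bhat]
    [Algebra ℂ Ahat] [Algebra ℂ Bhat] (V : (Ahat ⊗[ℂ] Bhat)ˣ) :
    ((Bhat ⊗[ℂ] Ahat) ⊗[ℂ] (Bhat ⊗[ℂ] Ahat))ˣ :=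
  Units.map (Algebra.TensorProduct.map
      (Algebra.TensorProduct.includeRight : Ahat →ₐ[ℂ] Bhat ⊗[ℂ] Ahat)
      (Algebra.TensorProduct.includeLeft : Bhat →ₐ[ℂ] Bhat ⊗[ℂ] Ahat)
      : Ahat ⊗[ℂ] Bhat →ₐ[ℂ] _).toRingHom.toMonoidHom V

/-- The codouble comultiplication `Δ_D(b̂⊗â) = (id ⊗ σ^V ⊗ id)(Δ̂_B(b̂) ⊗ Δ̂_A(â))`,
realised as conjugation by `V₂₃` of `(b̂⊗â) ↦ Δ̂_B(b̂)₁₃ Δ̂_A(â)₂₄`. -/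
noncomputable def DeltaD {Ahat Bhat : Type*} [Ring Ahat] [Ring Bhat]
    [Algebra ℂ Ahat] [Algebra ℂ Bhat]
    (V : (Ahat ⊗[ℂ] Bhat)ˣ)
    (ΔA : Ahat →ₐ[ℂ] Ahat ⊗[ℂ] Ahat) (ΔB : Bhat →ₐ[ℂ] Bhat ⊗[ℂ] Bhat) :
    (Bhat ⊗[ℂ] Ahat) →ₗ[ℂ] (Bhat ⊗[ℂ] Ahat) ⊗[ℂ] (Bhat ⊗[ℂ] Ahat) :=
  (LinearMap.mulLeft ℂ ((Vmid V : _ˣ) : (Bhat ⊗[ℂ] Ahat) ⊗[ℂ] (Bhat ⊗[ℂ] Ahat))) ∘ₗ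
  (LinearMap.mulRight ℂ (((Vmid V)⁻¹ : _ˣ) : (Bhat ⊗[ℂ] Ahat) ⊗[ℂ] (Bhat ⊗[ℂ] Ahat))) ∘ₗ
  (Algebra.TensorProduct.tensorTensorTensorComm ℂ ℂ ℂ ℂ Bhat Bhat Ahat Ahat).toLinearMap ∘ₗ
  (Algebra.TensorProduct.map ΔB ΔA).toLinearMap

set_option synthInstance.maxHeartbeats 1000000
set_option maxHeartbeats 1000000

namespace CodoubleAux

open Algebra.TensorProduct

variable {Ahat Bhat : Type*} [Ring Ahat] [Ring Bhat] [Algebra ℂ Ahat] [Algebra ℂ Bhat]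

/-- The untwisted codouble comultiplication as an algebra hom. -/
noncomputable def Phi (ΔA : Ahat →ₐ[ℂ] Ahat ⊗[ℂ] Ahat) (ΔB : Bhat →ₐ[ℂ] Bhat ⊗[ℂ] Bhat) :
    Bhat ⊗[ℂ] Ahat →ₐ[ℂ] (Bhat ⊗[ℂ] Ahat) ⊗[ℂ] (Bhat ⊗[ℂ] Ahat) :=
  (tensorTensorTensorComm ℂ ℂ ℂ ℂ Bhat Bhat Ahat Ahat).toAlgHom.comp (map ΔB ΔA)

variable (ΔA : Ahat →ₐ[ℂ] Ahat ⊗[ℂ] Ahat) (ΔB : Bhat →ₐ[ℂ] Bhat ⊗[ℂ] Bhat)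

noncomputable def Psi1 :
    (Bhat ⊗[ℂ] Ahat) ⊗[ℂ] (Bhat ⊗[ℂ] Ahat) →ₐ[ℂ]
      ((Bhat ⊗[ℂ] Ahat) ⊗[ℂ] (Bhat ⊗[ℂ] Ahat)) ⊗[ℂ] (Bhat ⊗[ℂ] Ahat) :=
  map (Phi ΔA ΔB) (AlgHom.id ℂ (Bhat ⊗[ℂ] Ahat))

noncomputable def Psi2 :
    (Bhat ⊗[ℂ] Ahat) ⊗[ℂ] (Bhat ⊗[ℂ] Ahat) →ₐ[ℂ]
      (Bhat ⊗[ℂ] Ahat) ⊗[ℂ] ((Bhat ⊗[ℂ] Ahat) ⊗[ℂ] (Bhat ⊗[ℂ] Ahat)) :=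
  map (AlgHom.id ℂ (Bhat ⊗[ℂ] Ahat)) (Phi ΔA ΔB)

@[simp] lemma Psi1_tmul (p q : Bhat ⊗[ℂ] Ahat) :
    Psi1 ΔA ΔB (p ⊗ₜ q) = Phi ΔA ΔB p ⊗ₜ q := rfl

@[simp] lemma Psi2_tmul (p q : Bhat ⊗[ℂ] Ahat) :
    Psi2 ΔA ΔB (p ⊗ₜ q) = p ⊗ₜ Phi ΔA ΔB q := rfl

lemma Phi_tmul (b : Bhat) (a : Ahat) :
    Phi ΔA ΔB (b ⊗ₜ a) = tensorTensorTensorComm ℂ ℂ ℂ ℂ Bhat Bhat Ahat Ahat (ΔB b ⊗ₜ ΔA a) := rfl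

lemma ttt_tmul_one (y : Bhat ⊗[ℂ] Bhat) :
    tensorTensorTensorComm ℂ ℂ ℂ ℂ Bhat Bhat Ahat Ahat (y ⊗ₜ (1 : Ahat ⊗[ℂ] Ahat))
      = map (includeLeft : Bhat →ₐ[ℂ] Bhat ⊗[ℂ] Ahat) includeLeft y := by
  induction y using TensorProduct.induction_on with
  | zero => simp
  | tmul b₁ b₂ => simp [Algebra.TensorProduct.one_def]
  | add x y hx hy => simp only [TensorProduct.add_tmul, map_add, hx, hy]

lemma ttt_one_tmul (x : Ahat ⊗[ℂ] Ahat) :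
    tensorTensorTensorComm ℂ ℂ ℂ ℂ Bhat Bhat Ahat Ahat ((1 : Bhat ⊗[ℂ] Bhat) ⊗ₜ x)
      = map (includeRight : Ahat →ₐ[ℂ] Bhat ⊗[ℂ] Ahat) includeRight x := by
  induction x using TensorProduct.induction_on with
  | zero => simp
  | tmul a₁ a₂ => simp [Algebra.TensorProduct.one_def]
  | add x y hx hy => simp only [TensorProduct.tmul_add, map_add, hx, hy]

@[simp] lemma Phi_inclL (b : Bhat) :
    Phi ΔA ΔB (b ⊗ₜ (1 : Ahat)) = map (includeLeft : Bhat →ₐ[ℂ] Bhat ⊗[ℂ] Ahat) includeLeft (ΔB b) := by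
  rw [Phi_tmul, map_one, ttt_tmul_one]

@[simp] lemma Phi_inclR (a : Ahat) :
    Phi ΔA ΔB ((1 : Bhat) ⊗ₜ a) = map (includeRight : Ahat →ₐ[ℂ] Bhat ⊗[ℂ] Ahat) includeRight (ΔA a) := by
  rw [Phi_tmul, map_one, ttt_one_tmul]

/-! Structural lemmas for coassociativity, B-side. -/

lemma psi1_mapLL (z : Bhat ⊗[ℂ] Bhat) :
    Psi1 ΔA ΔB (map (includeLeft : Bhat →ₐ[ℂ] Bhat ⊗[ℂ] Ahat) includeLeft z)
      = map (map (includeLeft : Bhat →ₐ[ℂ] Bhat ⊗[ℂ] Ahat) includeLeft)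
          (includeLeft : Bhat →ₐ[ℂ] Bhat ⊗[ℂ] Ahat)
          ((map ΔB (AlgHom.id ℂ Bhat)) z) := by
  induction z using TensorProduct.induction_on with
  | zero => simp
  | tmul b₁ b₂ => simp
  | add x y hx hy => simp only [map_add, hx, hy]

lemma psi2_mapLL (z : Bhat ⊗[ℂ] Bhat) :
    Psi2 ΔA ΔB (map (includeLeft : Bhat →ₐ[ℂ] Bhat ⊗[ℂ] Ahat) includeLeft z)
      = map (includeLeft : Bhat →ₐ[ℂ] Bhat ⊗[ℂ] Ahat)
          (map (includeLeft : Bhat →ₐ[ℂ] Bhat ⊗[ℂ] Ahat) includeLeft)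
          ((map (AlgHom.id ℂ Bhat) ΔB) z) := by
  induction z using TensorProduct.induction_on with
  | zero => simp
  | tmul b₁ b₂ => simp
  | add x y hx hy => simp only [map_add, hx, hy]

lemma asso_mapL (u : (Bhat ⊗[ℂ] Bhat) ⊗[ℂ] Bhat) :
    (Algebra.TensorProduct.assoc ℂ ℂ ℂ (Bhat ⊗[ℂ] Ahat) (Bhat ⊗[ℂ] Ahat) (Bhat ⊗[ℂ] Ahat))
        (map (map (includeLeft : Bhat →ₐ[ℂ] Bhat ⊗[ℂ] Ahat) includeLeft)
          (includeLeft : Bhat →ₐ[ℂ] Bhat ⊗[ℂ] Ahat) u)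
      = map (includeLeft : Bhat →ₐ[ℂ] Bhat ⊗[ℂ] Ahat)
          (map (includeLeft : Bhat →ₐ[ℂ] Bhat ⊗[ℂ] Ahat) includeLeft)
          ((Algebra.TensorProduct.assoc ℂ ℂ ℂ Bhat Bhat Bhat) u) := by
  induction u using TensorProduct.induction_on with
  | zero => simp
  | tmul y c =>
      induction y using TensorProduct.induction_on with
      | zero => simp
      | tmul b₁ b₂ => simp
      | add x y hx hy => simp only [TensorProduct.add_tmul, map_add, hx, hy]
  | add x y hx hy => simp only [map_add, hx, hy]

/-! Structural lemmas for coassociativity, A-side. -/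

lemma psi1_mapRR (z : Ahat ⊗[ℂ] Ahat) :
    Psi1 ΔA ΔB (map (includeRight : Ahat →ₐ[ℂ] Bhat ⊗[ℂ] Ahat) includeRight z)
      = map (map (includeRight : Ahat →ₐ[ℂ] Bhat ⊗[ℂ] Ahat) includeRight)
          (includeRight : Ahat →ₐ[ℂ] Bhat ⊗[ℂ] Ahat)
          ((map ΔA (AlgHom.id ℂ Ahat)) z) := by
  induction z using TensorProduct.induction_on with
  | zero => simp
  | tmul a₁ a₂ => simp
  | add x y hx hy => simp only [map_add, hx, hy]

lemma psi2_mapRR (z : Ahat ⊗[ℂ] Ahat) :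
    Psi2 ΔA ΔB (map (includeRight : Ahat →ₐ[ℂ] Bhat ⊗[ℂ] Ahat) includeRight z)
      = map (includeRight : Ahat →ₐ[ℂ] Bhat ⊗[ℂ] Ahat)
          (map (includeRight : Ahat →ₐ[ℂ] Bhat ⊗[ℂ] Ahat) includeRight)
          ((map (AlgHom.id ℂ Ahat) ΔA) z) := by
  induction z using TensorProduct.induction_on with
  | zero => simp
  | tmul a₁ a₂ => simp
  | add x y hx hy => simp only [map_add, hx, hy]

lemma asso_mapR (u : (Ahat ⊗[ℂ] Ahat) ⊗[ℂ] Ahat) :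
    (Algebra.TensorProduct.assoc ℂ ℂ ℂ (Bhat ⊗[ℂ] Ahat) (Bhat ⊗[ℂ] Ahat) (Bhat ⊗[ℂ] Ahat))
        (map (map (includeRight : Ahat →ₐ[ℂ] Bhat ⊗[ℂ] Ahat) includeRight)
          (includeRight : Ahat →ₐ[ℂ] Bhat ⊗[ℂ] Ahat) u)
      = map (includeRight : Ahat →ₐ[ℂ] Bhat ⊗[ℂ] Ahat)
          (map (includeRight : Ahat →ₐ[ℂ] Bhat ⊗[ℂ] Ahat) includeRight)
          ((Algebra.TensorProduct.assoc ℂ ℂ ℂ Ahat Ahat Ahat) u) := by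
  induction u using TensorProduct.induction_on with
  | zero => simp
  | tmul y c =>
      induction y using TensorProduct.induction_on with
      | zero => simp
      | tmul a₁ a₂ => simp
      | add x y hx hy => simp only [TensorProduct.add_tmul, map_add, hx, hy]
  | add x y hx hy => simp only [map_add, hx, hy]

lemma Phi_coassoc
    (hΔA : ∀ x : Ahat,
        (Algebra.TensorProduct.assoc ℂ ℂ ℂ Ahat Ahat Ahat)
          ((Algebra.TensorProduct.map ΔA (AlgHom.id ℂ Ahat)) (ΔA x))
        = (Algebra.TensorProduct.map (AlgHom.id ℂ Ahat) ΔA) (ΔA x))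
    (hΔB : ∀ x : Bhat,
        (Algebra.TensorProduct.assoc ℂ ℂ ℂ Bhat Bhat Bhat)
          ((Algebra.TensorProduct.map ΔB (AlgHom.id ℂ Bhat)) (ΔB x))
        = (Algebra.TensorProduct.map (AlgHom.id ℂ Bhat) ΔB) (ΔB x))
    (d : Bhat ⊗[ℂ] Ahat) :
    (Algebra.TensorProduct.assoc ℂ ℂ ℂ (Bhat ⊗[ℂ] Ahat) (Bhat ⊗[ℂ] Ahat) (Bhat ⊗[ℂ] Ahat))
        (Psi1 ΔA ΔB (Phi ΔA ΔB d)) = Psi2 ΔA ΔB (Phi ΔA ΔB d) := by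
  have h : ((Algebra.TensorProduct.assoc ℂ ℂ ℂ (Bhat ⊗[ℂ] Ahat) (Bhat ⊗[ℂ] Ahat)
        (Bhat ⊗[ℂ] Ahat)).toAlgHom.comp ((Psi1 ΔA ΔB).comp (Phi ΔA ΔB)))
      = (Psi2 ΔA ΔB).comp (Phi ΔA ΔB) := by
    ext x
    · show (Algebra.TensorProduct.assoc ℂ ℂ ℂ _ _ _)
          (Psi1 ΔA ΔB (Phi ΔA ΔB (x ⊗ₜ 1))) = Psi2 ΔA ΔB (Phi ΔA ΔB (x ⊗ₜ 1))
      rw [Phi_inclL, psi1_mapLL, asso_mapL, hΔB x, psi2_mapLL]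
    · show (Algebra.TensorProduct.assoc ℂ ℂ ℂ _ _ _)
          (Psi1 ΔA ΔB (Phi ΔA ΔB ((1 : Bhat) ⊗ₜ x))) = Psi2 ΔA ΔB (Phi ΔA ΔB ((1 : Bhat) ⊗ₜ x))
      rw [Phi_inclR, psi1_mapRR, asso_mapR, hΔA x, psi2_mapRR]
  exact AlgHom.congr_fun h d

/-! ## Bicharacter part -/

noncomputable def jmap : Ahat ⊗[ℂ] Bhat →ₐ[ℂ] (Bhat ⊗[ℂ] Ahat) ⊗[ℂ] (Bhat ⊗[ℂ] Ahat) :=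
  map (includeRight : Ahat →ₐ[ℂ] Bhat ⊗[ℂ] Ahat) (includeLeft : Bhat →ₐ[ℂ] Bhat ⊗[ℂ] Ahat)

@[simp] lemma jmap_tmul (a : Ahat) (b : Bhat) :
    (jmap : Ahat ⊗[ℂ] Bhat →ₐ[ℂ] _) (a ⊗ₜ b) = ((1 : Bhat) ⊗ₜ a) ⊗ₜ (b ⊗ₜ (1 : Ahat)) := rfl

/-- `V₂₃` in `D ⊗ (D ⊗ D)`. -/
noncomputable def F23 : Ahat ⊗[ℂ] Bhat →ₐ[ℂ]
    (Bhat ⊗[ℂ] Ahat) ⊗[ℂ] ((Bhat ⊗[ℂ] Ahat) ⊗[ℂ] (Bhat ⊗[ℂ] Ahat)) :=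
  map (includeRight : Ahat →ₐ[ℂ] Bhat ⊗[ℂ] Ahat)
    ((includeLeft : (Bhat ⊗[ℂ] Ahat) →ₐ[ℂ] (Bhat ⊗[ℂ] Ahat) ⊗[ℂ] (Bhat ⊗[ℂ] Ahat)).comp
      (includeLeft : Bhat →ₐ[ℂ] Bhat ⊗[ℂ] Ahat))

/-- `V₄₅` in `D ⊗ (D ⊗ D)`. -/
noncomputable def F45 : Ahat ⊗[ℂ] Bhat →ₐ[ℂ]
    (Bhat ⊗[ℂ] Ahat) ⊗[ℂ] ((Bhat ⊗[ℂ] Ahat) ⊗[ℂ] (Bhat ⊗[ℂ] Ahat)) :=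
  (includeRight : ((Bhat ⊗[ℂ] Ahat) ⊗[ℂ] (Bhat ⊗[ℂ] Ahat)) →ₐ[ℂ]
      (Bhat ⊗[ℂ] Ahat) ⊗[ℂ] ((Bhat ⊗[ℂ] Ahat) ⊗[ℂ] (Bhat ⊗[ℂ] Ahat))).comp jmap

/-- `V₂₅` in `D ⊗ (D ⊗ D)`. -/
noncomputable def F25 : Ahat ⊗[ℂ] Bhat →ₐ[ℂ]
    (Bhat ⊗[ℂ] Ahat) ⊗[ℂ] ((Bhat ⊗[ℂ] Ahat) ⊗[ℂ] (Bhat ⊗[ℂ] Ahat)) :=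
  map (includeRight : Ahat →ₐ[ℂ] Bhat ⊗[ℂ] Ahat)
    ((includeRight : (Bhat ⊗[ℂ] Ahat) →ₐ[ℂ] (Bhat ⊗[ℂ] Ahat) ⊗[ℂ] (Bhat ⊗[ℂ] Ahat)).comp
      (includeLeft : Bhat →ₐ[ℂ] Bhat ⊗[ℂ] Ahat))

@[simp] lemma F23_tmul (a : Ahat) (b : Bhat) :
    (F23 : Ahat ⊗[ℂ] Bhat →ₐ[ℂ] _) (a ⊗ₜ b)
      = ((1 : Bhat) ⊗ₜ a) ⊗ₜ ((b ⊗ₜ (1 : Ahat)) ⊗ₜ (1 : (Bhat ⊗[ℂ] Ahat))) := rfl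

@[simp] lemma F45_tmul (a : Ahat) (b : Bhat) :
    (F45 : Ahat ⊗[ℂ] Bhat →ₐ[ℂ] _) (a ⊗ₜ b)
      = (1 : Bhat ⊗[ℂ] Ahat) ⊗ₜ (((1 : Bhat) ⊗ₜ a) ⊗ₜ (b ⊗ₜ (1 : Ahat))) := rfl

@[simp] lemma F25_tmul (a : Ahat) (b : Bhat) :
    (F25 : Ahat ⊗[ℂ] Bhat →ₐ[ℂ] _) (a ⊗ₜ b)
      = ((1 : Bhat) ⊗ₜ a) ⊗ₜ ((1 : Bhat ⊗[ℂ] Ahat) ⊗ₜ (b ⊗ₜ (1 : Ahat))) := rfl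

lemma B1 (x : Ahat ⊗[ℂ] Bhat) :
    (Algebra.TensorProduct.assoc ℂ ℂ ℂ (Bhat ⊗[ℂ] Ahat) (Bhat ⊗[ℂ] Ahat) (Bhat ⊗[ℂ] Ahat))
        (jmap x ⊗ₜ (1 : Bhat ⊗[ℂ] Ahat)) = F23 x := by
  induction x using TensorProduct.induction_on with
  | zero => simp
  | tmul a b => simp
  | add x y hx hy => simp only [map_add, TensorProduct.add_tmul, hx, hy]

lemma B2_aux (u : Ahat ⊗[ℂ] Ahat) (b : Bhat) :
    (Algebra.TensorProduct.assoc ℂ ℂ ℂ (Bhat ⊗[ℂ] Ahat) (Bhat ⊗[ℂ] Ahat) (Bhat ⊗[ℂ] Ahat))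
        ((map (includeRight : Ahat →ₐ[ℂ] Bhat ⊗[ℂ] Ahat) includeRight u) ⊗ₜ (b ⊗ₜ (1 : Ahat)))
      = map (includeRight : Ahat →ₐ[ℂ] Bhat ⊗[ℂ] Ahat) jmap
          ((Algebra.TensorProduct.assoc ℂ ℂ ℂ Ahat Ahat Bhat) (u ⊗ₜ b)) := by
  induction u using TensorProduct.induction_on with
  | zero => simp
  | tmul a₁ a₂ => simp
  | add x y hx hy => simp only [map_add, TensorProduct.add_tmul, hx, hy]

lemma B2_hom (x : Ahat ⊗[ℂ] Bhat) :
    (Algebra.TensorProduct.assoc ℂ ℂ ℂ (Bhat ⊗[ℂ] Ahat) (Bhat ⊗[ℂ] Ahat) (Bhat ⊗[ℂ] Ahat))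
        (Psi1 ΔA ΔB (jmap x))
      = map (includeRight : Ahat →ₐ[ℂ] Bhat ⊗[ℂ] Ahat) jmap
          ((Algebra.TensorProduct.assoc ℂ ℂ ℂ Ahat Ahat Bhat)
            ((map ΔA (AlgHom.id ℂ Bhat)) x)) := by
  induction x using TensorProduct.induction_on with
  | zero => simp
  | tmul a b =>
      have h1 : Psi1 ΔA ΔB (jmap (a ⊗ₜ b))
          = (map (includeRight : Ahat →ₐ[ℂ] Bhat ⊗[ℂ] Ahat) includeRight (ΔA a))
              ⊗ₜ (b ⊗ₜ (1 : Ahat)) := by simp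
      rw [h1, B2_aux]
      simp
  | add x y hx hy => simp only [map_add, hx, hy]

lemma B2a (x : Ahat ⊗[ℂ] Bhat) :
    map (includeRight : Ahat →ₐ[ℂ] Bhat ⊗[ℂ] Ahat) jmap
        ((includeRight : (Ahat ⊗[ℂ] Bhat) →ₐ[ℂ] Ahat ⊗[ℂ] (Ahat ⊗[ℂ] Bhat)) x)
      = F45 x := by
  simp [F45, includeRight_apply, Algebra.TensorProduct.one_def]

lemma B2b (x : Ahat ⊗[ℂ] Bhat) :
    map (includeRight : Ahat →ₐ[ℂ] Bhat ⊗[ℂ] Ahat) jmap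
        ((map (AlgHom.id ℂ Ahat) (includeRight : Bhat →ₐ[ℂ] Ahat ⊗[ℂ] Bhat)) x)
      = F25 x := by
  induction x using TensorProduct.induction_on with
  | zero => simp
  | tmul a b => simp [Algebra.TensorProduct.one_def]
  | add x y hx hy => simp only [map_add, hx, hy]

lemma B4_hom (x : Ahat ⊗[ℂ] Bhat) :
    Psi2 ΔA ΔB (jmap x)
      = map (includeRight : Ahat →ₐ[ℂ] Bhat ⊗[ℂ] Ahat)
          (map (includeLeft : Bhat →ₐ[ℂ] Bhat ⊗[ℂ] Ahat) includeLeft)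
          ((map (AlgHom.id ℂ Ahat) ΔB) x) := by
  induction x using TensorProduct.induction_on with
  | zero => simp
  | tmul a b => simp
  | add x y hx hy => simp only [map_add, hx, hy]

lemma B4a (x : Ahat ⊗[ℂ] Bhat) :
    map (includeRight : Ahat →ₐ[ℂ] Bhat ⊗[ℂ] Ahat)
        (map (includeLeft : Bhat →ₐ[ℂ] Bhat ⊗[ℂ] Ahat) includeLeft)
        ((map (AlgHom.id ℂ Ahat) (includeLeft : Bhat →ₐ[ℂ] Bhat ⊗[ℂ] Bhat)) x)
      = F23 x := by
  induction x using TensorProduct.induction_on with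
  | zero => simp
  | tmul a b => simp [Algebra.TensorProduct.one_def]
  | add x y hx hy => simp only [map_add, hx, hy]

lemma B4b (x : Ahat ⊗[ℂ] Bhat) :
    map (includeRight : Ahat →ₐ[ℂ] Bhat ⊗[ℂ] Ahat)
        (map (includeLeft : Bhat →ₐ[ℂ] Bhat ⊗[ℂ] Ahat) includeLeft)
        ((map (AlgHom.id ℂ Ahat) (includeRight : Bhat →ₐ[ℂ] Bhat ⊗[ℂ] Bhat)) x)
      = F25 x := by
  induction x using TensorProduct.induction_on with
  | zero => simp
  | tmul a b => simp [Algebra.TensorProduct.one_def]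
  | add x y hx hy => simp only [map_add, hx, hy]

lemma B5_pure (a : Ahat) (b : Bhat) (y : Ahat ⊗[ℂ] Bhat) :
    (F23 (a ⊗ₜ b) : (Bhat ⊗[ℂ] Ahat) ⊗[ℂ] ((Bhat ⊗[ℂ] Ahat) ⊗[ℂ] (Bhat ⊗[ℂ] Ahat)))
        * F45 y = F45 y * F23 (a ⊗ₜ b) := by
  have h : (LinearMap.mulLeft ℂ
        ((F23 (a ⊗ₜ b) : (Bhat ⊗[ℂ] Ahat) ⊗[ℂ] ((Bhat ⊗[ℂ] Ahat) ⊗[ℂ] (Bhat ⊗[ℂ] Ahat)))))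
          ∘ₗ (F45 : Ahat ⊗[ℂ] Bhat →ₐ[ℂ] _).toLinearMap
      = (LinearMap.mulRight ℂ
          ((F23 (a ⊗ₜ b) : (Bhat ⊗[ℂ] Ahat) ⊗[ℂ] ((Bhat ⊗[ℂ] Ahat) ⊗[ℂ] (Bhat ⊗[ℂ] Ahat)))))
          ∘ₗ (F45 : Ahat ⊗[ℂ] Bhat →ₐ[ℂ] _).toLinearMap := by
    apply TensorProduct.ext'
    intro a' b'
    simp [Algebra.TensorProduct.tmul_mul_tmul]
  simpa using LinearMap.congr_fun h y

lemma B5 (x y : Ahat ⊗[ℂ] Bhat) :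
    (F23 x : (Bhat ⊗[ℂ] Ahat) ⊗[ℂ] ((Bhat ⊗[ℂ] Ahat) ⊗[ℂ] (Bhat ⊗[ℂ] Ahat)))
        * F45 y = F45 y * F23 x := by
  have h : (LinearMap.mulRight ℂ
        ((F45 y : (Bhat ⊗[ℂ] Ahat) ⊗[ℂ] ((Bhat ⊗[ℂ] Ahat) ⊗[ℂ] (Bhat ⊗[ℂ] Ahat)))))
          ∘ₗ (F23 : Ahat ⊗[ℂ] Bhat →ₐ[ℂ] _).toLinearMap
      = (LinearMap.mulLeft ℂ
          ((F45 y : (Bhat ⊗[ℂ] Ahat) ⊗[ℂ] ((Bhat ⊗[ℂ] Ahat) ⊗[ℂ] (Bhat ⊗[ℂ] Ahat)))))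
          ∘ₗ (F23 : Ahat ⊗[ℂ] Bhat →ₐ[ℂ] _).toLinearMap := by
    apply TensorProduct.ext'
    intro a b
    simpa using B5_pure a b y
  simpa using LinearMap.congr_fun h x

lemma lemmaB (V : (Ahat ⊗[ℂ] Bhat)ˣ)
    (hV1 : (Algebra.TensorProduct.assoc ℂ ℂ ℂ Ahat Ahat Bhat)
          ((Algebra.TensorProduct.map ΔA (AlgHom.id ℂ Bhat)) (V : Ahat ⊗[ℂ] Bhat))
        = (Algebra.TensorProduct.includeRight (V : Ahat ⊗[ℂ] Bhat))
          * ((Algebra.TensorProduct.map (AlgHom.id ℂ Ahat)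
                (Algebra.TensorProduct.includeRight : Bhat →ₐ[ℂ] Ahat ⊗[ℂ] Bhat))
              (V : Ahat ⊗[ℂ] Bhat)))
    (hV2 : (Algebra.TensorProduct.map (AlgHom.id ℂ Ahat) ΔB) (V : Ahat ⊗[ℂ] Bhat)
        = ((Algebra.TensorProduct.map (AlgHom.id ℂ Ahat)
              (Algebra.TensorProduct.includeLeft : Bhat →ₐ[ℂ] Bhat ⊗[ℂ] Bhat))
            (V : Ahat ⊗[ℂ] Bhat))
          * ((Algebra.TensorProduct.map (AlgHom.id ℂ Ahat)
                (Algebra.TensorProduct.includeRight : Bhat →ₐ[ℂ] Bhat ⊗[ℂ] Bhat))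
              (V : Ahat ⊗[ℂ] Bhat))) :
    (Algebra.TensorProduct.assoc ℂ ℂ ℂ (Bhat ⊗[ℂ] Ahat) (Bhat ⊗[ℂ] Ahat) (Bhat ⊗[ℂ] Ahat))
        ((jmap (V : Ahat ⊗[ℂ] Bhat) ⊗ₜ (1 : Bhat ⊗[ℂ] Ahat))
          * Psi1 ΔA ΔB (jmap (V : Ahat ⊗[ℂ] Bhat)))
      = ((1 : Bhat ⊗[ℂ] Ahat) ⊗ₜ jmap (V : Ahat ⊗[ℂ] Bhat))
          * Psi2 ΔA ΔB (jmap (V : Ahat ⊗[ℂ] Bhat)) := by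
  have h45 : ((1 : Bhat ⊗[ℂ] Ahat) ⊗ₜ[ℂ] jmap (V : Ahat ⊗[ℂ] Bhat) :
      (Bhat ⊗[ℂ] Ahat) ⊗[ℂ] ((Bhat ⊗[ℂ] Ahat) ⊗[ℂ] (Bhat ⊗[ℂ] Ahat)))
      = F45 (V : Ahat ⊗[ℂ] Bhat) := rfl
  rw [map_mul, B1, B2_hom, hV1, map_mul, B2a, B2b, B4_hom, hV2, map_mul, B4a, B4b, h45,
    ← mul_assoc, B5, mul_assoc]

/-! ## Conjugation form of `DeltaD` -/

lemma Vmid_val (V : (Ahat ⊗[ℂ] Bhat)ˣ) :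
    ((Vmid V : ((Bhat ⊗[ℂ] Ahat) ⊗[ℂ] (Bhat ⊗[ℂ] Ahat))ˣ) :
        (Bhat ⊗[ℂ] Ahat) ⊗[ℂ] (Bhat ⊗[ℂ] Ahat)) = jmap (V : Ahat ⊗[ℂ] Bhat) := rfl

lemma Vmid_inv_val (V : (Ahat ⊗[ℂ] Bhat)ˣ) :
    (((Vmid V)⁻¹ : ((Bhat ⊗[ℂ] Ahat) ⊗[ℂ] (Bhat ⊗[ℂ] Ahat))ˣ) :
        (Bhat ⊗[ℂ] Ahat) ⊗[ℂ] (Bhat ⊗[ℂ] Ahat)) = jmap ((V⁻¹ : _ˣ) : Ahat ⊗[ℂ] Bhat) := rfl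

lemma DeltaD_apply (V : (Ahat ⊗[ℂ] Bhat)ˣ) (d : Bhat ⊗[ℂ] Ahat) :
    DeltaD V ΔA ΔB d
      = ((Vmid V : _ˣ) : (Bhat ⊗[ℂ] Ahat) ⊗[ℂ] (Bhat ⊗[ℂ] Ahat))
          * (Phi ΔA ΔB d * (((Vmid V)⁻¹ : _ˣ) : (Bhat ⊗[ℂ] Ahat) ⊗[ℂ] (Bhat ⊗[ℂ] Ahat))) := rfl

lemma map_DeltaD_left (V : (Ahat ⊗[ℂ] Bhat)ˣ)
    (x : (Bhat ⊗[ℂ] Ahat) ⊗[ℂ] (Bhat ⊗[ℂ] Ahat)) :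
    TensorProduct.map (DeltaD V ΔA ΔB) LinearMap.id x
      = (((Vmid V : _ˣ) : (Bhat ⊗[ℂ] Ahat) ⊗[ℂ] (Bhat ⊗[ℂ] Ahat)) ⊗ₜ (1 : Bhat ⊗[ℂ] Ahat))
          * (Psi1 ΔA ΔB x
            * ((((Vmid V)⁻¹ : _ˣ) : (Bhat ⊗[ℂ] Ahat) ⊗[ℂ] (Bhat ⊗[ℂ] Ahat))
                ⊗ₜ (1 : Bhat ⊗[ℂ] Ahat))) := by
  have h : TensorProduct.map (DeltaD V ΔA ΔB) LinearMap.id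
      = LinearMap.mulLeft ℂ
          (((Vmid V : _ˣ) : (Bhat ⊗[ℂ] Ahat) ⊗[ℂ] (Bhat ⊗[ℂ] Ahat)) ⊗ₜ[ℂ] (1 : Bhat ⊗[ℂ] Ahat))
        ∘ₗ (LinearMap.mulRight ℂ
            ((((Vmid V)⁻¹ : _ˣ) : (Bhat ⊗[ℂ] Ahat) ⊗[ℂ] (Bhat ⊗[ℂ] Ahat))
              ⊗ₜ[ℂ] (1 : Bhat ⊗[ℂ] Ahat))
          ∘ₗ (Psi1 ΔA ΔB).toLinearMap) := by
    apply TensorProduct.ext'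
    intro p q
    simp [DeltaD_apply, Algebra.TensorProduct.tmul_mul_tmul, mul_assoc]
  rw [h]
  simp

lemma map_DeltaD_right (V : (Ahat ⊗[ℂ] Bhat)ˣ)
    (x : (Bhat ⊗[ℂ] Ahat) ⊗[ℂ] (Bhat ⊗[ℂ] Ahat)) :
    TensorProduct.map LinearMap.id (DeltaD V ΔA ΔB) x
      = ((1 : Bhat ⊗[ℂ] Ahat) ⊗ₜ ((Vmid V : _ˣ) : (Bhat ⊗[ℂ] Ahat) ⊗[ℂ] (Bhat ⊗[ℂ] Ahat)))
          * (Psi2 ΔA ΔB x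
            * ((1 : Bhat ⊗[ℂ] Ahat)
                ⊗ₜ (((Vmid V)⁻¹ : _ˣ) : (Bhat ⊗[ℂ] Ahat) ⊗[ℂ] (Bhat ⊗[ℂ] Ahat)))) := by
  have h : TensorProduct.map LinearMap.id (DeltaD V ΔA ΔB)
      = LinearMap.mulLeft ℂ
          ((1 : Bhat ⊗[ℂ] Ahat) ⊗ₜ[ℂ] ((Vmid V : _ˣ) : (Bhat ⊗[ℂ] Ahat) ⊗[ℂ] (Bhat ⊗[ℂ] Ahat)))
        ∘ₗ (LinearMap.mulRight ℂ
            ((1 : Bhat ⊗[ℂ] Ahat)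
              ⊗ₜ[ℂ] (((Vmid V)⁻¹ : _ˣ) : (Bhat ⊗[ℂ] Ahat) ⊗[ℂ] (Bhat ⊗[ℂ] Ahat)))
          ∘ₗ (Psi2 ΔA ΔB).toLinearMap) := by
    apply TensorProduct.ext'
    intro p q
    simp [DeltaD_apply, Algebra.TensorProduct.tmul_mul_tmul, mul_assoc]
  rw [h]
  simp

lemma chain3 {M : Type*} [Monoid M] {a b c a' b' c' : M}
    (h1 : a * b = a' * b') (h2 : c = c') :
    a * (b * c) = a' * (b' * c') := by
  rw [← mul_assoc, h1, h2, mul_assoc]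

lemma chainX {M : Type*} [Monoid M] {A B C D F A' B' C' D' F' : M}
    (h1 : A * B = A' * B') (h2 : C = C') (h3 : D * F = D' * F') :
    A * ((B * (C * D)) * F) = A' * ((B' * (C' * D')) * F') := by
  calc A * ((B * (C * D)) * F) = (A * B) * (C * (D * F)) := by simp only [mul_assoc]
    _ = (A' * B') * (C' * (D' * F')) := by rw [h1, h2, h3]
    _ = A' * ((B' * (C' * D')) * F') := by simp only [mul_assoc]

lemma lemmaB' (V : (Ahat ⊗[ℂ] Bhat)ˣ)
    (hV1 : (Algebra.TensorProduct.assoc ℂ ℂ ℂ Ahat Ahat Bhat)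
          ((Algebra.TensorProduct.map ΔA (AlgHom.id ℂ Bhat)) (V : Ahat ⊗[ℂ] Bhat))
        = (Algebra.TensorProduct.includeRight (V : Ahat ⊗[ℂ] Bhat))
          * ((Algebra.TensorProduct.map (AlgHom.id ℂ Ahat)
                (Algebra.TensorProduct.includeRight : Bhat →ₐ[ℂ] Ahat ⊗[ℂ] Bhat))
              (V : Ahat ⊗[ℂ] Bhat)))
    (hV2 : (Algebra.TensorProduct.map (AlgHom.id ℂ Ahat) ΔB) (V : Ahat ⊗[ℂ] Bhat)
        = ((Algebra.TensorProduct.map (AlgHom.id ℂ Ahat)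
              (Algebra.TensorProduct.includeLeft : Bhat →ₐ[ℂ] Bhat ⊗[ℂ] Bhat))
            (V : Ahat ⊗[ℂ] Bhat))
          * ((Algebra.TensorProduct.map (AlgHom.id ℂ Ahat)
                (Algebra.TensorProduct.includeRight : Bhat →ₐ[ℂ] Bhat ⊗[ℂ] Bhat))
              (V : Ahat ⊗[ℂ] Bhat))) :
    (Algebra.TensorProduct.assoc ℂ ℂ ℂ (Bhat ⊗[ℂ] Ahat) (Bhat ⊗[ℂ] Ahat) (Bhat ⊗[ℂ] Ahat))
        ((((Vmid V : _ˣ) : (Bhat ⊗[ℂ] Ahat) ⊗[ℂ] (Bhat ⊗[ℂ] Ahat)) ⊗ₜ (1 : Bhat ⊗[ℂ] Ahat))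
          * Psi1 ΔA ΔB ((Vmid V : _ˣ) : (Bhat ⊗[ℂ] Ahat) ⊗[ℂ] (Bhat ⊗[ℂ] Ahat)))
      = ((1 : Bhat ⊗[ℂ] Ahat) ⊗ₜ ((Vmid V : _ˣ) : (Bhat ⊗[ℂ] Ahat) ⊗[ℂ] (Bhat ⊗[ℂ] Ahat)))
          * Psi2 ΔA ΔB ((Vmid V : _ˣ) : (Bhat ⊗[ℂ] Ahat) ⊗[ℂ] (Bhat ⊗[ℂ] Ahat)) :=
  lemmaB ΔA ΔB V hV1 hV2

lemma lemmaB_inv (V : (Ahat ⊗[ℂ] Bhat)ˣ)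
    (hV1 : (Algebra.TensorProduct.assoc ℂ ℂ ℂ Ahat Ahat Bhat)
          ((Algebra.TensorProduct.map ΔA (AlgHom.id ℂ Bhat)) (V : Ahat ⊗[ℂ] Bhat))
        = (Algebra.TensorProduct.includeRight (V : Ahat ⊗[ℂ] Bhat))
          * ((Algebra.TensorProduct.map (AlgHom.id ℂ Ahat)
                (Algebra.TensorProduct.includeRight : Bhat →ₐ[ℂ] Ahat ⊗[ℂ] Bhat))
              (V : Ahat ⊗[ℂ] Bhat)))
    (hV2 : (Algebra.TensorProduct.map (AlgHom.id ℂ Ahat) ΔB) (V : Ahat ⊗[ℂ] Bhat)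
        = ((Algebra.TensorProduct.map (AlgHom.id ℂ Ahat)
              (Algebra.TensorProduct.includeLeft : Bhat →ₐ[ℂ] Bhat ⊗[ℂ] Bhat))
            (V : Ahat ⊗[ℂ] Bhat))
          * ((Algebra.TensorProduct.map (AlgHom.id ℂ Ahat)
                (Algebra.TensorProduct.includeRight : Bhat →ₐ[ℂ] Bhat ⊗[ℂ] Bhat))
              (V : Ahat ⊗[ℂ] Bhat))) :
    (Algebra.TensorProduct.assoc ℂ ℂ ℂ (Bhat ⊗[ℂ] Ahat) (Bhat ⊗[ℂ] Ahat) (Bhat ⊗[ℂ] Ahat))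
        (Psi1 ΔA ΔB (((Vmid V)⁻¹ : _ˣ) : (Bhat ⊗[ℂ] Ahat) ⊗[ℂ] (Bhat ⊗[ℂ] Ahat))
          * (((((Vmid V)⁻¹ : _ˣ) : (Bhat ⊗[ℂ] Ahat) ⊗[ℂ] (Bhat ⊗[ℂ] Ahat)))
              ⊗ₜ (1 : Bhat ⊗[ℂ] Ahat)))
      = Psi2 ΔA ΔB (((Vmid V)⁻¹ : _ˣ) : (Bhat ⊗[ℂ] Ahat) ⊗[ℂ] (Bhat ⊗[ℂ] Ahat))
          * ((1 : Bhat ⊗[ℂ] Ahat)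
              ⊗ₜ ((((Vmid V)⁻¹ : _ˣ) : (Bhat ⊗[ℂ] Ahat) ⊗[ℂ] (Bhat ⊗[ℂ] Ahat)))) := by
  have hu : Units.map ((Algebra.TensorProduct.assoc ℂ ℂ ℂ (Bhat ⊗[ℂ] Ahat) (Bhat ⊗[ℂ] Ahat)
          (Bhat ⊗[ℂ] Ahat)).toAlgHom.toRingHom.toMonoidHom)
        (Units.map (RingHom.toMonoidHom (AlgHom.toRingHom
            (includeLeft : ((Bhat ⊗[ℂ] Ahat) ⊗[ℂ] (Bhat ⊗[ℂ] Ahat)) →ₐ[ℂ]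
              ((Bhat ⊗[ℂ] Ahat) ⊗[ℂ] (Bhat ⊗[ℂ] Ahat)) ⊗[ℂ] (Bhat ⊗[ℂ] Ahat)))) (Vmid V)
          * Units.map ((Psi1 ΔA ΔB).toRingHom.toMonoidHom) (Vmid V))
      = Units.map (RingHom.toMonoidHom (AlgHom.toRingHom
            (includeRight : ((Bhat ⊗[ℂ] Ahat) ⊗[ℂ] (Bhat ⊗[ℂ] Ahat)) →ₐ[ℂ]
              (Bhat ⊗[ℂ] Ahat) ⊗[ℂ] ((Bhat ⊗[ℂ] Ahat) ⊗[ℂ] (Bhat ⊗[ℂ] Ahat))))) (Vmid V)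
          * Units.map ((Psi2 ΔA ΔB).toRingHom.toMonoidHom) (Vmid V) := by
    apply Units.ext
    simp only [map_mul, Units.val_mul, Units.coe_map, AlgHom.toRingHom_eq_coe,
      RingHom.toMonoidHom_eq_coe, MonoidHom.coe_coe, RingHom.coe_coe,
      AlgEquiv.toAlgHom_eq_coe, AlgHom.coe_coe, includeLeft_apply, includeRight_apply]
    rw [← map_mul]
    exact lemmaB' ΔA ΔB V hV1 hV2
  have h2 := congrArg (fun t : ((Bhat ⊗[ℂ] Ahat) ⊗[ℂ]
      ((Bhat ⊗[ℂ] Ahat) ⊗[ℂ] (Bhat ⊗[ℂ] Ahat)))ˣ =>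
      ((t⁻¹ : _ˣ) : (Bhat ⊗[ℂ] Ahat) ⊗[ℂ] ((Bhat ⊗[ℂ] Ahat) ⊗[ℂ] (Bhat ⊗[ℂ] Ahat)))) hu
  simpa only [mul_inv_rev, Units.val_mul, Units.coe_map_inv, Units.coe_map,
    AlgHom.toRingHom_eq_coe, RingHom.toMonoidHom_eq_coe, MonoidHom.coe_coe, RingHom.coe_coe,
    AlgEquiv.toAlgHom_eq_coe, AlgHom.coe_coe, includeLeft_apply, includeRight_apply,
    map_mul, AlgEquiv.coe_toAlgHom] using h2

end CodoubleAux

theorem codouble_comultiplication_coassociative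
    {Ahat Bhat : Type*} [Ring Ahat] [Ring Bhat] [Algebra ℂ Ahat] [Algebra ℂ Bhat]
    (ΔA : Ahat →ₐ[ℂ] Ahat ⊗[ℂ] Ahat) (ΔB : Bhat →ₐ[ℂ] Bhat ⊗[ℂ] Bhat)
    -- coassociativity of `Δ̂_A` and `Δ̂_B`
    (hΔA : ∀ x : Ahat,
        (Algebra.TensorProduct.assoc ℂ ℂ ℂ Ahat Ahat Ahat)
          ((Algebra.TensorProduct.map ΔA (AlgHom.id ℂ Ahat)) (ΔA x))
        = (Algebra.TensorProduct.map (AlgHom.id ℂ Ahat) ΔA) (ΔA x))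
    (hΔB : ∀ x : Bhat,
        (Algebra.TensorProduct.assoc ℂ ℂ ℂ Bhat Bhat Bhat)
          ((Algebra.TensorProduct.map ΔB (AlgHom.id ℂ Bhat)) (ΔB x))
        = (Algebra.TensorProduct.map (AlgHom.id ℂ Bhat) ΔB) (ΔB x))
    (V : (Ahat ⊗[ℂ] Bhat)ˣ)
    -- the bicharacter condition in the first leg: `(Δ̂_A ⊗ id)V = V₂₃ V₁₃`
    (hV1 : (Algebra.TensorProduct.assoc ℂ ℂ ℂ Ahat Ahat Bhat)
          ((Algebra.TensorProduct.map ΔA (AlgHom.id ℂ Bhat)) (V : Ahat ⊗[ℂ] Bhat))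
        = (Algebra.TensorProduct.includeRight (V : Ahat ⊗[ℂ] Bhat))
          * ((Algebra.TensorProduct.map (AlgHom.id ℂ Ahat)
                (Algebra.TensorProduct.includeRight : Bhat →ₐ[ℂ] Ahat ⊗[ℂ] Bhat))
              (V : Ahat ⊗[ℂ] Bhat)))
    -- the bicharacter condition in the second leg: `(id ⊗ Δ̂_B)V = V₁₂ V₁₃`
    (hV2 : (Algebra.TensorProduct.map (AlgHom.id ℂ Ahat) ΔB) (V : Ahat ⊗[ℂ] Bhat)
        = ((Algebra.TensorProduct.map (AlgHom.id ℂ Ahat)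
              (Algebra.TensorProduct.includeLeft : Bhat →ₐ[ℂ] Bhat ⊗[ℂ] Bhat))
            (V : Ahat ⊗[ℂ] Bhat))
          * ((Algebra.TensorProduct.map (AlgHom.id ℂ Ahat)
                (Algebra.TensorProduct.includeRight : Bhat →ₐ[ℂ] Bhat ⊗[ℂ] Bhat))
              (V : Ahat ⊗[ℂ] Bhat))) :
    -- coassociativity of `Δ_D`
    ∀ d : Bhat ⊗[ℂ] Ahat,
      (TensorProduct.assoc ℂ _ _ _)
        ((TensorProduct.map (DeltaD V ΔA ΔB) LinearMap.id) (DeltaD V ΔA ΔB d))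
      = (TensorProduct.map LinearMap.id (DeltaD V ΔA ΔB)) (DeltaD V ΔA ΔB d) := by
  intro d
  rw [CodoubleAux.map_DeltaD_left, CodoubleAux.map_DeltaD_right, CodoubleAux.DeltaD_apply]
  have hE : ∀ z : ((Bhat ⊗[ℂ] Ahat) ⊗[ℂ] (Bhat ⊗[ℂ] Ahat)) ⊗[ℂ] (Bhat ⊗[ℂ] Ahat),
      (TensorProduct.assoc ℂ ((Bhat ⊗[ℂ] Ahat)) ((Bhat ⊗[ℂ] Ahat)) ((Bhat ⊗[ℂ] Ahat))) z
        = (Algebra.TensorProduct.assoc ℂ ℂ ℂ (Bhat ⊗[ℂ] Ahat) (Bhat ⊗[ℂ] Ahat)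
            (Bhat ⊗[ℂ] Ahat)) z := fun _ => rfl
  rw [hE]
  have h1 := CodoubleAux.lemmaB' ΔA ΔB V hV1 hV2
  rw [map_mul] at h1
  have h2 := CodoubleAux.Phi_coassoc ΔA ΔB hΔA hΔB d
  have h3 := CodoubleAux.lemmaB_inv ΔA ΔB V hV1 hV2
  rw [map_mul] at h3
  have e1 : CodoubleAux.Psi1 ΔA ΔB
        (↑(Vmid V) * (CodoubleAux.Phi ΔA ΔB d * ↑(Vmid V)⁻¹))
      = CodoubleAux.Psi1 ΔA ΔB ↑(Vmid V)
          * (CodoubleAux.Psi1 ΔA ΔB (CodoubleAux.Phi ΔA ΔB d)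
            * CodoubleAux.Psi1 ΔA ΔB ↑(Vmid V)⁻¹) := by
    rw [map_mul, map_mul]
  have e2 : CodoubleAux.Psi2 ΔA ΔB
        (↑(Vmid V) * (CodoubleAux.Phi ΔA ΔB d * ↑(Vmid V)⁻¹))
      = CodoubleAux.Psi2 ΔA ΔB ↑(Vmid V)
          * (CodoubleAux.Psi2 ΔA ΔB (CodoubleAux.Phi ΔA ΔB d)
            * CodoubleAux.Psi2 ΔA ΔB ↑(Vmid V)⁻¹) := by
    rw [map_mul, map_mul]
  rw [e1, e2]
  simp only [map_mul]
  exact CodoubleAux.chainX h1 h2 h3
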